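/- Let φ : closure(Q) → ℝ^{n+1} be continuous on the closed box Q = ∏_{i=0}^{n}[mᵢ, Mᵢ], satisfying for each i: φᵢ(x) > 0 when xᵢ = mᵢ and φᵢ(x) < 0 when xᵢ = Mᵢ. Then φ has a zero in the open box ∏(mᵢ, Mᵢ). -/

import Mathlib

set_option linter.unusedSectionVars false

namespace PM
open Finset Function

attribute [local instance] Classical.propDecidable

variable {d k : ℕ}

abbrev Simp (d k : ℕ) := (Fin d → Fin k) × Equiv.Perm (Fin d)

def vtx (s : Simp d k) (j : Fin (d+1)) : Fin d → ℕ :=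
  fun i => (s.1 i : ℕ) + if ((s.2.symm i : ℕ) < (j : ℕ)) then 1 else 0

def lab (L : (Fin d → ℕ) → Fin (d+1)) (s : Simp d k) : Fin (d+1) → Fin (d+1) :=
  fun j => L (vtx s j)

def isGood (f : Fin (d+1) → Fin (d+1)) (j : Fin (d+1)) : Prop :=
  ∀ v : Fin (d+1), v ≠ Fin.last d → ∃ t, t ≠ j ∧ f t = v

theorem vtx_le (s : Simp d k) (j : Fin (d+1)) (i : Fin d) : vtx s j i ≤ k := by
  have := (s.1 i).isLt
  unfold vtx
  split <;> omega

theorem isGood_congr {f g : Fin (d+1) → Fin (d+1)} {j : Fin (d+1)}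
    (h : ∀ t, t ≠ j → f t = g t) : isGood f j ↔ isGood g j := by
  constructor <;> intro hg v hv <;> obtain ⟨t, ht, hft⟩ := hg v hv
  · exact ⟨t, ht, (h t ht).symm.trans hft⟩
  · exact ⟨t, ht, (h t ht).trans hft⟩

section Pivot

variable {e : ℕ} [NeZero k]

/-- pivot "up": partner of a simplex through the facet obtained by dropping vertex 0. -/
def up (s : Simp (e+1) k) : Simp (e+1) k :=
  (fun i => if i = s.2 0 then s.1 i + 1 else s.1 i, s.2 * finRotate (e+1))

/-- pivot "down": partner through the facet dropping the last vertex. -/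
def down (s : Simp (e+1) k) : Simp (e+1) k :=
  (fun i => if i = s.2 (Fin.last e) then s.1 i - 1 else s.1 i, s.2 * (finRotate (e+1))⁻¹)

theorem finRotate_symm_zero : (finRotate (e+1)).symm 0 = Fin.last e := by
  rw [Equiv.symm_apply_eq, finRotate_succ_apply, Fin.last_add_one]

theorem finRotate_symm_succ (u : Fin e) : (finRotate (e+1)).symm u.succ = u.castSucc := by
  rw [Equiv.symm_apply_eq, finRotate_succ_apply, Fin.coeSucc_eq_succ]

theorem val_add_one_lt {a : Fin k} (h : (a : ℕ) + 1 < k) : ((a + 1 : Fin k) : ℕ) = a + 1 := by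
  have h1 : ((a + 1 : Fin k) : ℕ) = ((a : ℕ) + (1 % k)) % k := by rw [Fin.add_def, Fin.val_one']
  have h2 : 1 % k = 1 := Nat.mod_eq_of_lt (by omega)
  rw [h1, h2, Nat.mod_eq_of_lt h]

theorem val_sub_one {a : Fin k} (h : (a : ℕ) ≠ 0) : ((a - 1 : Fin k) : ℕ) = (a : ℕ) - 1 := by
  have hlt := a.isLt
  have hk2 : 2 ≤ k := by omega
  have h1 : ((a - 1 : Fin k) : ℕ) = (k - (1 % k) + (a : ℕ)) % k := by
    rw [Fin.coe_sub, Fin.val_one']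
  have h2 : 1 % k = 1 := Nat.mod_eq_of_lt (by omega)
  rw [h1, h2]
  have h3 : k - 1 + (a : ℕ) = k + ((a : ℕ) - 1) := by omega
  rw [h3, Nat.add_mod_left, Nat.mod_eq_of_lt (by omega)]

theorem down_up (s : Simp (e+1) k) : up (down s) = s := by
  unfold up down
  have h2 : (s.2 * (finRotate (e+1))⁻¹) 0 = s.2 (Fin.last e) := by
    rw [Equiv.Perm.mul_apply]
    exact congrArg s.2 finRotate_symm_zero
  refine Prod.ext (funext fun i => ?_) (by simp [mul_assoc])
  simp only [h2]
  by_cases hi : i = s.2 (Fin.last e) <;> simp [hi, sub_add_cancel]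

theorem up_down (s : Simp (e+1) k) : down (up s) = s := by
  unfold up down
  have h2 : (s.2 * finRotate (e+1)) (Fin.last e) = s.2 0 := by
    rw [Equiv.Perm.mul_apply, finRotate_succ_apply, Fin.last_add_one]
  refine Prod.ext (funext fun i => ?_) (by simp [mul_assoc])
  simp only [h2]
  by_cases hi : i = s.2 0 <;> simp [hi, add_sub_cancel_right]

theorem vtx_up (s : Simp (e+1) k) (hgap : (s.1 (s.2 0) : ℕ) + 1 < k) (t : Fin (e+1)) :
    vtx (up s) t.castSucc = vtx s t.succ := by
  funext i
  have hsymm : (up s).2.symm i = (finRotate (e+1)).symm (s.2.symm i) := by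
    show ((s.2 * finRotate (e+1))⁻¹ : Equiv.Perm _) i = _
    rw [mul_inv_rev, Equiv.Perm.mul_apply]
    rfl
  rcases Fin.eq_zero_or_eq_succ (s.2.symm i) with h0 | ⟨u, hu⟩
  · have hi : i = s.2 0 := by rw [← h0, Equiv.apply_symm_apply]
    have hup1 : ((up s).1 i : ℕ) = (s.1 i : ℕ) + 1 := by
      simp only [up, if_pos hi]
      exact val_add_one_lt (hi ▸ hgap)
    unfold vtx
    rw [hsymm, h0, finRotate_symm_zero, hup1]
    simp only [Fin.val_last, Fin.coe_castSucc, Fin.val_succ, h0, Fin.val_zero]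
    have hnl : ¬ (e < (t : ℕ)) := by omega
    simp [hnl]
  · have hi : i ≠ s.2 0 := by
      intro h
      rw [h, Equiv.symm_apply_apply] at hu
      exact (Fin.succ_ne_zero u) hu.symm
    have hup1 : ((up s).1 i : ℕ) = (s.1 i : ℕ) := by simp only [up, if_neg hi]
    unfold vtx
    rw [hsymm, hu, finRotate_symm_succ, hup1]
    simp only [Fin.coe_castSucc, Fin.val_succ]
    congr 1
    by_cases hlt : (u : ℕ) < (t : ℕ)
    · rw [if_pos hlt, if_pos (by omega)]
    · rw [if_neg hlt, if_neg (by omega)]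

theorem isGood_up (L : (Fin (e+1) → ℕ) → Fin (e+2)) (s : Simp (e+1) k)
    (hgap : (s.1 (s.2 0) : ℕ) + 1 < k) :
    isGood (lab L s) 0 ↔ isGood (lab L (up s)) (Fin.last (e+1)) := by
  have key : ∀ t : Fin (e+1), lab L (up s) t.castSucc = lab L s t.succ :=
    fun t => congrArg L (vtx_up s hgap t)
  constructor
  · intro hg v hv
    obtain ⟨t, ht, hlab⟩ := hg v hv
    obtain ⟨t', rfl⟩ := Fin.exists_succ_eq.2 ht
    exact ⟨t'.castSucc, (Fin.castSucc_lt_last t').ne, (key t').trans hlab⟩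
  · intro hg v hv
    obtain ⟨t, ht, hlab⟩ := hg v hv
    obtain ⟨t', rfl⟩ := Fin.exists_castSucc_eq.2 ht
    exact ⟨t'.succ, Fin.succ_ne_zero t', ((key t').symm).trans hlab⟩

theorem zero_ne_last : (0 : Fin (e+2)) ≠ Fin.last (e+1) := by
  intro h
  have := congrArg Fin.val h
  simp [Fin.val_last] at this

theorem gap_of_good (L : (Fin (e+1) → ℕ) → Fin (e+2)) (s : Simp (e+1) k)
    (h : isGood (lab L s) 0)
    (htop : ∀ x : Fin (e+1) → ℕ, (∀ i, x i ≤ k) → (∃ i, x i = k) → L x ≠ 0) :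
    (s.1 (s.2 0) : ℕ) + 1 < k := by
  obtain ⟨t, ht0, hlab⟩ := h 0 zero_ne_last
  have hx : vtx s t (s.2 0) = (s.1 (s.2 0) : ℕ) + 1 := by
    unfold vtx
    rw [Equiv.symm_apply_apply]
    have : (0 : ℕ) < (t : ℕ) := by
      rcases Nat.eq_zero_or_pos (t : ℕ) with h' | h'
      · exact absurd (Fin.ext h' : t = 0) ht0
      · exact h'
    simp [Fin.val_zero, this]
  have hle := (s.1 (s.2 0)).isLt
  by_contra hcon
  have hk : vtx s t (s.2 0) = k := by omega
  exact htop (vtx s t) (vtx_le s t) ⟨s.2 0, hk⟩ hlab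

theorem notGood_last (L : (Fin (e+1) → ℕ) → Fin (e+2)) (s : Simp (e+1) k)
    (hb : s.1 (s.2 (Fin.last e)) = 0) (hne : s.2 (Fin.last e) ≠ Fin.last e)
    (h0cond : ∀ x : Fin (e+1) → ℕ, (∀ i, x i ≤ k) → ∀ i : Fin (e+1), x i = 0 → L x ≠ i.succ) :
    ¬ isGood (lab L s) (Fin.last (e+1)) := by
  intro h
  set μ := s.2 (Fin.last e) with hμ
  have hμs : μ.succ ≠ Fin.last (e+1) := by
    intro hcon
    rw [← Fin.succ_last, Fin.succ_inj] at hcon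
    exact hne hcon
  obtain ⟨t, htl, hlab⟩ := h μ.succ hμs
  have hval : vtx s t μ = 0 := by
    unfold vtx
    rw [hμ, Equiv.symm_apply_apply]
    have htv : (t : ℕ) ≤ e := by
      have := t.isLt
      rcases Nat.lt_or_ge (t : ℕ) (e+1) with h' | h'
      · omega
      · exfalso; apply htl; apply Fin.ext; simp [Fin.val_last]; omega
    have : ¬ ((Fin.last e : ℕ) < (t : ℕ)) := by simp [Fin.val_last]; omega
    rw [if_neg this, hb]
    simp
  exact h0cond (vtx s t) (vtx_le s t) μ hval hlab

/-- positions for the middle pivot -/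
def p1 (j : Fin (e+2)) : Fin (e+1) := ⟨((j : ℕ) - 1) % (e+1), Nat.mod_lt _ (Nat.succ_pos e)⟩
def p2 (j : Fin (e+2)) : Fin (e+1) := ⟨(j : ℕ) % (e+1), Nat.mod_lt _ (Nat.succ_pos e)⟩

def mid (s : Simp (e+1) k) (j : Fin (e+2)) : Simp (e+1) k :=
  (s.1, s.2 * Equiv.swap (p1 j) (p2 j))

theorem jval_bounds {j : Fin (e+2)} (hj0 : j ≠ 0) (hjl : j ≠ Fin.last (e+1)) :
    1 ≤ (j : ℕ) ∧ (j : ℕ) ≤ e := by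
  have h1 := j.isLt
  constructor
  · rcases Nat.eq_zero_or_pos (j : ℕ) with h | h
    · exact absurd (Fin.ext h : j = 0) hj0
    · exact h
  · rcases Nat.lt_or_ge (j : ℕ) (e+1) with h | h
    · omega
    · exfalso; apply hjl; apply Fin.ext; simp [Fin.val_last]; omega

theorem p1_val {j : Fin (e+2)} (hj0 : j ≠ 0) (hjl : j ≠ Fin.last (e+1)) :
    (p1 j : ℕ) = (j : ℕ) - 1 := by
  have := jval_bounds hj0 hjl
  exact Nat.mod_eq_of_lt (by omega)

theorem p2_val {j : Fin (e+2)} (hj0 : j ≠ 0) (hjl : j ≠ Fin.last (e+1)) :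
    (p2 j : ℕ) = (j : ℕ) := by
  have := jval_bounds hj0 hjl
  exact Nat.mod_eq_of_lt (by omega)

theorem p1_ne_p2 {j : Fin (e+2)} (hj0 : j ≠ 0) (hjl : j ≠ Fin.last (e+1)) : p1 j ≠ p2 j := by
  have := jval_bounds hj0 hjl
  intro h
  have := congrArg Fin.val h
  rw [p1_val hj0 hjl, p2_val hj0 hjl] at this
  omega

theorem vtx_mid (s : Simp (e+1) k) {j : Fin (e+2)} (hj0 : j ≠ 0) (hjl : j ≠ Fin.last (e+1))
    {t : Fin (e+2)} (ht : t ≠ j) : vtx (mid s j) t = vtx s t := by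
  have hb := jval_bounds hj0 hjl
  have htj : (t : ℕ) ≠ (j : ℕ) := fun h => ht (Fin.ext h)
  funext i
  have hsymm : (mid s j).2.symm i = Equiv.swap (p1 j) (p2 j) (s.2.symm i) := by
    show ((s.2 * Equiv.swap (p1 j) (p2 j))⁻¹ : Equiv.Perm _) i = _
    rw [mul_inv_rev, Equiv.Perm.mul_apply, Equiv.swap_inv]
    rfl
  unfold vtx
  rw [hsymm]
  congr 1
  rcases eq_or_ne (s.2.symm i) (p1 j) with h1 | h1
  · rw [h1, Equiv.swap_apply_left]
    rw [p1_val hj0 hjl, p2_val hj0 hjl]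
    by_cases hlt : (j : ℕ) < (t : ℕ)
    · rw [if_pos hlt, if_pos (by omega)]
    · rw [if_neg hlt, if_neg (by omega)]
  · rcases eq_or_ne (s.2.symm i) (p2 j) with h2 | h2
    · rw [h2, Equiv.swap_apply_right]
      rw [p1_val hj0 hjl, p2_val hj0 hjl]
      by_cases hlt : (j : ℕ) - 1 < (t : ℕ)
      · rw [if_pos hlt, if_pos (by omega)]
      · rw [if_neg hlt, if_neg (by omega)]
    · rw [Equiv.swap_apply_of_ne_of_ne h1 h2]

theorem mid_mid (s : Simp (e+1) k) (j : Fin (e+2)) : mid (mid s j) j = s := by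
  unfold mid
  refine Prod.ext rfl ?_
  show s.2 * Equiv.swap (p1 j) (p2 j) * Equiv.swap (p1 j) (p2 j) = s.2
  rw [mul_assoc, Equiv.swap_mul_self, mul_one]

theorem mid_ne (s : Simp (e+1) k) {j : Fin (e+2)} (hj0 : j ≠ 0) (hjl : j ≠ Fin.last (e+1)) :
    mid s j ≠ s := by
  intro h
  have h2 : s.2 * Equiv.swap (p1 j) (p2 j) = s.2 := congrArg Prod.snd h
  have := congrArg (fun σ : Equiv.Perm (Fin (e+1)) => σ (p1 j)) h2
  simp only [Equiv.Perm.mul_apply, Equiv.swap_apply_left] at this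
  exact p1_ne_p2 hj0 hjl (s.2.injective this).symm

theorem up_perm_last (s : Simp (e+1) k) : (up s).2 (Fin.last e) = s.2 0 := by
  show (s.2 * finRotate (e+1)) (Fin.last e) = s.2 0
  rw [Equiv.Perm.mul_apply, finRotate_succ_apply, Fin.last_add_one]

theorem down_perm_zero (s : Simp (e+1) k) : (down s).2 0 = s.2 (Fin.last e) := by
  show (s.2 * (finRotate (e+1))⁻¹) 0 = s.2 (Fin.last e)
  rw [Equiv.Perm.mul_apply]
  exact congrArg s.2 finRotate_symm_zero

/-- extend a permutation of `Fin e` to `Fin (e+1)` fixing the last element -/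
def extPerm (σ : Equiv.Perm (Fin e)) : Equiv.Perm (Fin (e+1)) :=
  finSuccEquivLast.symm.permCongr σ.optionCongr

theorem extPerm_castSucc (σ : Equiv.Perm (Fin e)) (t : Fin e) :
    extPerm σ t.castSucc = (σ t).castSucc := by
  simp [extPerm, Equiv.permCongr_apply]

theorem extPerm_last (σ : Equiv.Perm (Fin e)) : extPerm σ (Fin.last e) = Fin.last e := by
  simp [extPerm, Equiv.permCongr_apply]

theorem extPerm_symm_castSucc (σ : Equiv.Perm (Fin e)) (t : Fin e) :
    (extPerm σ).symm t.castSucc = (σ.symm t).castSucc := by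
  rw [Equiv.symm_apply_eq, extPerm_castSucc, Equiv.apply_symm_apply]

theorem extPerm_symm_last (σ : Equiv.Perm (Fin e)) :
    (extPerm σ).symm (Fin.last e) = Fin.last e := by
  rw [Equiv.symm_apply_eq, extPerm_last]

theorem extPerm_injective : Injective (extPerm (e := e)) := by
  intro σ τ h
  ext t
  have := congrArg (fun π : Equiv.Perm (Fin (e+1)) => π t.castSucc) h
  simp only [extPerm_castSucc] at this
  exact congrArg Fin.val (Fin.castSucc_injective e this)

theorem vtx_ext (b' : Fin e → Fin k) (σ : Equiv.Perm (Fin e)) (t : Fin (e+1)) :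
    vtx ((Fin.snoc b' 0, extPerm σ) : Simp (e+1) k) t.castSucc
      = Fin.snoc (vtx ((b', σ) : Simp e k) t) 0 := by
  funext i
  induction i using Fin.lastCases with
  | last =>
    unfold vtx
    simp only [Fin.snoc_last, extPerm_symm_last, Fin.val_last, Fin.coe_castSucc]
    rw [if_neg (by have := t.isLt; omega)]
    simp
  | cast i' =>
    unfold vtx
    simp only [Fin.snoc_castSucc, extPerm_symm_castSucc, Fin.coe_castSucc]

theorem surj_iff_good_ext (L : (Fin (e+1) → ℕ) → Fin (e+2))
    (L' : (Fin e → ℕ) → Fin (e+1))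
    (hL' : ∀ y : Fin e → ℕ, (∀ i, y i ≤ k) → (L' y).castSucc = L (Fin.snoc y 0))
    (b' : Fin e → Fin k) (σ : Equiv.Perm (Fin e)) :
    Surjective (lab L' ((b', σ) : Simp e k)) ↔
      isGood (lab L ((Fin.snoc b' 0, extPerm σ) : Simp (e+1) k)) (Fin.last (e+1)) := by
  have key : ∀ t : Fin (e+1),
      lab L ((Fin.snoc b' 0, extPerm σ) : Simp (e+1) k) t.castSucc
        = (lab L' ((b', σ) : Simp e k) t).castSucc := by
    intro t
    rw [lab, vtx_ext, ← hL' _ (vtx_le _ t)]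
    rfl
  constructor
  · intro hs v hv
    obtain ⟨v', rfl⟩ := Fin.exists_castSucc_eq.2 hv
    obtain ⟨t, ht⟩ := hs v'
    exact ⟨t.castSucc, (Fin.castSucc_lt_last t).ne, by rw [key, ht]⟩
  · intro hg v'
    obtain ⟨t, ht, hlab⟩ := hg v'.castSucc (Fin.castSucc_lt_last v').ne
    obtain ⟨t', rfl⟩ := Fin.exists_castSucc_eq.2 ht
    rw [key] at hlab
    exact ⟨t', Fin.castSucc_injective _ hlab⟩

end Pivot

theorem goodCount_surj (f : Fin (d+1) → Fin (d+1)) (hf : Surjective f) :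
    (univ.filter (isGood f)).card = 1 := by
  have hinj : Injective f := Finite.injective_iff_surjective.2 hf
  obtain ⟨j0, hj0⟩ := hf (Fin.last d)
  have : univ.filter (isGood f) = {j0} := by
    ext j
    simp only [mem_filter, mem_univ, true_and, mem_singleton]
    constructor
    · intro hg
      by_contra hne
      have hfj : f j ≠ Fin.last d := fun h => hne (hinj (h.trans hj0.symm))
      obtain ⟨t, ht, hft⟩ := hg (f j) hfj
      exact ht (hinj hft)
    · rintro rfl
      intro v hv
      obtain ⟨t, ht⟩ := hf v
      exact ⟨t, fun h => hv (by rw [← ht, h, hj0]), ht⟩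
  rw [this, card_singleton]

theorem goodCount_nonsurj (f : Fin (d+1) → Fin (d+1)) (hf : ¬ Surjective f) :
    Even (univ.filter (isGood f)).card := by
  by_cases hmiss : ∃ v, v ≠ Fin.last d ∧ ∀ t, f t ≠ v
  · obtain ⟨v, hv, hvr⟩ := hmiss
    have : univ.filter (isGood f) = ∅ := by
      ext j
      simp only [mem_filter, mem_univ, true_and, notMem_empty, iff_false]
      intro hg
      obtain ⟨t, _, hft⟩ := hg v hv
      exact hvr t hft
    simp [this]
  · push_neg at hmiss
    -- every v ≠ last is in the range
    have hrange : ∀ v : Fin (d+1), v ≠ Fin.last d → ∃ t, f t = v := by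
      intro v hv; obtain ⟨t, ht⟩ := hmiss v hv; exact ⟨t, ht⟩
    have hlast : ∀ t, f t ≠ Fin.last d := by
      intro t ht
      apply hf
      intro v
      by_cases hv : v = Fin.last d
      · exact ⟨t, by rw [ht, hv]⟩
      · exact hrange v hv
    have hninj : ¬ Injective f := fun h => hf (Finite.injective_iff_surjective.1 h)
    rw [Injective] at hninj
    push_neg at hninj
    obtain ⟨j₁, j₂, hf12, hne12⟩ := hninj
    set r := f j₁ with hr
    -- fiberwise counting
    have himage : image f univ = univ.erase (Fin.last d) := by
      ext v
      simp only [mem_image, mem_univ, true_and, mem_erase]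
      constructor
      · rintro ⟨t, rfl⟩; exact ⟨hlast t, trivial⟩
      · rintro ⟨hv, -⟩; exact hrange v hv
    have hcards : (univ : Finset (Fin (d+1))).card
        = ∑ v ∈ image f univ, (univ.filter fun t => f t = v).card :=
      card_eq_sum_card_fiberwise (fun x _ => mem_image_of_mem f (mem_univ x))
    have himc : (image f univ).card = d := by
      rw [himage, card_erase_of_mem (mem_univ _), card_univ, Fintype.card_fin]; rfl
    have hfib1 : ∀ v ∈ image f univ, 1 ≤ (univ.filter fun t => f t = v).card := by
      intro v hv
      rw [mem_image] at hv
      obtain ⟨t, -, ht⟩ := hv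
      exact card_pos.2 ⟨t, by simp [ht]⟩
    -- sum of (fib - 1) = 1
    have hsum1 : ∑ v ∈ image f univ, ((univ.filter fun t => f t = v).card - 1) = 1 := by
      have h1 : d + 1 = ∑ v ∈ image f univ, (univ.filter fun t => f t = v).card := by
        rw [← hcards, card_univ, Fintype.card_fin]
      have h2 : ∑ v ∈ image f univ, (univ.filter fun t => f t = v).card
          = ∑ v ∈ image f univ, (((univ.filter fun t => f t = v).card - 1) + 1) := by
        apply Finset.sum_congr rfl
        intro v hv
        have := hfib1 v hv
        omega
      rw [Finset.sum_add_distrib] at h2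
      simp only [Finset.sum_const, smul_eq_mul, mul_one, himc] at h2
      omega
    -- uniqueness of the repeated value
    have hfr2 : 2 ≤ (univ.filter fun t => f t = r).card := by
      apply Finset.one_lt_card.2
      exact ⟨j₁, by simp [hr], j₂, by simp [← hf12], hne12⟩
    have hrim : r ∈ image f univ := mem_image_of_mem f (mem_univ j₁)
    have claimU : ∀ a b : Fin (d+1), a ≠ b → f a = f b → f a = r := by
      intro a b hab hfab
      by_contra hfar
      have ham : f a ∈ image f univ := mem_image_of_mem f (mem_univ a)
      have hfa2 : 2 ≤ (univ.filter fun t => f t = f a).card :=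
        Finset.one_lt_card.2 ⟨a, by simp, b, by simp [← hfab], hab⟩
      have key : ((univ.filter fun t => f t = f a).card - 1)
          + ((univ.filter fun t => f t = r).card - 1)
          ≤ ∑ v ∈ image f univ, ((univ.filter fun t => f t = v).card - 1) :=
        Finset.add_le_sum (f := fun v => (univ.filter fun t => f t = v).card - 1)
          (fun i _ => Nat.zero_le _) ham hrim hfar
      omega
    have hfr_le : (univ.filter fun t => f t = r).card - 1
        ≤ ∑ v ∈ image f univ, ((univ.filter fun t => f t = v).card - 1) :=
      Finset.single_le_sum (f := fun v => (univ.filter fun t => f t = v).card - 1)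
        (fun i _ => Nat.zero_le _) hrim
    have hfr : (univ.filter fun t => f t = r).card = 2 := by omega
    have hgood : univ.filter (isGood f) = univ.filter fun t => f t = r := by
      ext j
      simp only [mem_filter, mem_univ, true_and]
      constructor
      · intro hg
        obtain ⟨t, htj, hft⟩ := hg (f j) (hlast j)
        exact hft.symm.trans (claimU t j htj hft)
      · intro hfj
        intro v hv
        obtain ⟨t, ht⟩ := hrange v hv
        by_cases hvr : v = r
        · rcases eq_or_ne j j₁ with rfl | hj1
          · exact ⟨j₂, fun h => hne12 h.symm, by rw [← hf12, hvr]⟩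
          · exact ⟨j₁, fun h => hj1 h.symm, by rw [← hr, hvr]⟩
        · exact ⟨t, fun h => hvr (by rw [← ht, h, hfj]), ht⟩
    rw [hgood, hfr]
    exact even_two




theorem even_card_inv {α : Type*} [DecidableEq α] :
    ∀ (n : ℕ) (s : Finset α), s.card = n → ∀ f : α → α, (∀ a ∈ s, f a ∈ s) →
    (∀ a ∈ s, f (f a) = a) → (∀ a ∈ s, f a ≠ a) → Even s.card := by
  intro n
  induction n using Nat.strong_induction_on with
  | _ n ih =>
    intro s hsn f hmem hinv hfix
    rcases s.eq_empty_or_nonempty with rfl | ⟨a, ha⟩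
    · simp
    · have hfa : f a ∈ s := hmem a ha
      have hne : f a ≠ a := hfix a ha
      set s' := (s.erase a).erase (f a) with hs'
      have hfaa : f a ∈ s.erase a := mem_erase.2 ⟨hne, hfa⟩
      have hcard : s.card = s'.card + 2 := by
        rw [hs', card_erase_of_mem hfaa, card_erase_of_mem ha]
        have h2 : 2 ≤ s.card := one_lt_card.2 ⟨a, ha, f a, hfa, fun h => hne h.symm⟩
        omega
      have hsub : ∀ b ∈ s', b ∈ s ∧ b ≠ a ∧ b ≠ f a := by
        intro b hb
        rw [hs', mem_erase, mem_erase] at hb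
        exact ⟨hb.2.2, hb.2.1, hb.1⟩
      have hmem' : ∀ b ∈ s', f b ∈ s' := by
        intro b hb
        obtain ⟨hbs, hba, hbfa⟩ := hsub b hb
        rw [hs', mem_erase, mem_erase]
        refine ⟨?_, ?_, hmem b hbs⟩
        · intro h; exact hba (by rw [← hinv b hbs, h, hinv a ha])
        · intro h; exact hbfa (by rw [← hinv b hbs, h])
      have hinv' : ∀ b ∈ s', f (f b) = b := fun b hb => hinv b (hsub b hb).1
      have hfix' : ∀ b ∈ s', f b ≠ b := fun b hb => hfix b (hsub b hb).1
      have : Even s'.card := ih s'.card (by omega) s' rfl f hmem' hinv' hfix'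
      rw [hcard]
      exact this.add even_two

theorem filter_prod_card {α β : Type*} [Fintype α] [Fintype β] [DecidableEq α]
    (P : α × β → Prop) [DecidablePred P] :
    (univ.filter P).card = ∑ a : α, (univ.filter fun b => P (a, b)).card := by
  rw [card_eq_sum_card_fiberwise (f := Prod.fst) (t := univ) (fun x _ => mem_univ _)]
  apply Finset.sum_congr rfl
  intro a _
  apply Finset.card_bij (fun p _ => p.2)
  · intro p hp
    simp only [mem_filter, mem_univ, true_and] at hp ⊢
    rcases hp with ⟨hP, h1⟩
    have hpe : (a, p.2) = p := by rw [← h1]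
    rwa [hpe]
  · intro p hp q hq hpq
    simp only [mem_filter, mem_univ, true_and] at hp hq
    exact Prod.ext (hp.2.trans hq.2.symm) hpq
  · intro b hb
    simp only [mem_filter, mem_univ, true_and] at hb
    exact ⟨(a, b), by simp [hb], rfl⟩


theorem kuhn : ∀ (d : ℕ) (k : ℕ), 0 < k → ∀ (L : (Fin d → ℕ) → Fin (d+1)),
    (∀ x : Fin d → ℕ, (∀ i, x i ≤ k) → ∀ i : Fin d, x i = 0 → L x ≠ i.succ) →
    (∀ x : Fin d → ℕ, (∀ i, x i ≤ k) → (∃ i, x i = k) → L x ≠ 0) →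
    Odd ((univ.filter fun s : Simp d k => Surjective (lab L s)).card) := by
  intro d
  induction d with
  | zero =>
    intro k hk L h0 htop
    haveI hss : Subsingleton (Fin (0+1)) := ⟨fun a b => Fin.ext (by omega)⟩
    have hall : ∀ s : Simp 0 k, Surjective (lab L s) := by
      intro s v
      exact ⟨0, Subsingleton.elim _ _⟩
    rw [filter_true_of_mem (fun s _ => hall s), card_univ]
    have h1 : Fintype.card (Simp 0 k) = 1 := by
      rw [Fintype.card_prod, Fintype.card_fun, Fintype.card_perm]
      simp
    rw [h1]
    exact odd_one
  | succ e ih =>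
    intro k hk L h0 htop
    haveI : NeZero k := ⟨hk.ne'⟩
    set L' : (Fin e → ℕ) → Fin (e+1) := fun y =>
      if h : L (Fin.snoc y 0) = Fin.last (e+1) then 0 else (L (Fin.snoc y 0)).castPred h
      with hL'def
    have hsnoc_bdd : ∀ y : Fin e → ℕ, (∀ i, y i ≤ k) → ∀ i, (Fin.snoc y 0 : Fin (e+1) → ℕ) i ≤ k := by
      intro y hy i
      induction i using Fin.lastCases with
      | last => simp
      | cast i' => simp [hy i']
    have hnotlast : ∀ y : Fin e → ℕ, (∀ i, y i ≤ k) → L (Fin.snoc y 0) ≠ Fin.last (e+1) := by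
      intro y hy h
      have h2 := h0 (Fin.snoc y 0) (hsnoc_bdd y hy) (Fin.last e) (by simp)
      rw [Fin.succ_last] at h2
      exact h2 h
    have hL' : ∀ y : Fin e → ℕ, (∀ i, y i ≤ k) →
        (L' y).castSucc = L (Fin.snoc y 0) := by
      intro y hy
      rw [hL'def]
      simp only
      rw [dif_neg (hnotlast y hy)]
      exact Fin.castSucc_castPred _ _
    have h0' : ∀ y : Fin e → ℕ, (∀ i, y i ≤ k) → ∀ i : Fin e, y i = 0 → L' y ≠ i.succ := by
      intro y hy i hyi hcon
      have h1 : (L' y).castSucc = (i.succ).castSucc := by rw [hcon]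
      rw [hL' y hy, ← Fin.succ_castSucc] at h1
      exact h0 (Fin.snoc y 0) (hsnoc_bdd y hy) i.castSucc (by simp [hyi]) h1
    have htop' : ∀ y : Fin e → ℕ, (∀ i, y i ≤ k) → (∃ i, y i = k) → L' y ≠ 0 := by
      rintro y hy ⟨i, hyi⟩ hcon
      have h1 : (L' y).castSucc = (0 : Fin (e+2)) := by rw [hcon]; simp
      rw [hL' y hy] at h1
      exact htop (Fin.snoc y 0) (hsnoc_bdd y hy) ⟨i.castSucc, by simp [hyi]⟩ h1
    have hIH := ih k hk L' h0' htop'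
    set T : Finset (Simp (e+1) k × Fin (e+2)) :=
      univ.filter (fun p => isGood (lab L p.1) p.2) with hT
    set Bp : Simp (e+1) k × Fin (e+2) → Prop := fun p =>
      p.2 = Fin.last (e+1) ∧ p.1.2 (Fin.last e) = Fin.last e ∧ p.1.1 (Fin.last e) = 0
      with hBp
    have step1 : (univ.filter fun s : Simp (e+1) k => Surjective (lab L s)).card % 2
        = T.card % 2 := by
      have hA : (univ.filter fun s : Simp (e+1) k => Surjective (lab L s)).card
          = ∑ s : Simp (e+1) k, (if Surjective (lab L s) then 1 else 0) :=
        Finset.card_filter _ _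
      have hB : T.card = ∑ s : Simp (e+1) k,
          (univ.filter fun j => isGood (lab L s) j).card := by
        rw [hT]
        exact filter_prod_card _
      rw [hA, hB, Finset.sum_nat_mod,
        Finset.sum_nat_mod univ 2 (fun s => (univ.filter fun j => isGood (lab L s) j).card)]
      congr 1
      apply Finset.sum_congr rfl
      intro s _
      by_cases hs : Surjective (lab L s)
      · rw [if_pos hs, goodCount_surj _ hs]
      · rw [if_neg hs, Nat.even_iff.1 (goodCount_nonsurj _ hs)]
    have step2 : (T.filter Bp).card + (T.filter (fun p => ¬ Bp p)).card = T.card :=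
      Finset.card_filter_add_card_filter_not Bp
    have step3 : Even ((T.filter (fun p => ¬ Bp p)).card) := by
      set Φ : Simp (e+1) k × Fin (e+2) → Simp (e+1) k × Fin (e+2) := fun p =>
        if p.2 = 0 then (up p.1, Fin.last (e+1))
        else if p.2 = Fin.last (e+1) then (down p.1, 0)
        else (mid p.1 p.2, p.2) with hΦ
      have Φ0 : ∀ s : Simp (e+1) k, Φ (s, 0) = (up s, Fin.last (e+1)) := by
        intro s
        simp only [hΦ]
        simp
      have Φl : ∀ s : Simp (e+1) k, Φ (s, Fin.last (e+1)) = (down s, 0) := by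
        intro s
        simp only [hΦ]
        rw [if_neg (fun h => (zero_ne_last (e := e)) h.symm)]
        simp
      have Φm : ∀ (s : Simp (e+1) k) (j : Fin (e+2)), j ≠ 0 → j ≠ Fin.last (e+1) →
          Φ (s, j) = (mid s j, j) := by
        intro s j hj0 hjl
        simp only [hΦ]
        rw [if_neg hj0, if_neg hjl]
      have mem_iff : ∀ p : Simp (e+1) k × Fin (e+2),
          p ∈ T.filter (fun p => ¬ Bp p) ↔ isGood (lab L p.1) p.2 ∧ ¬ Bp p := by
        intro p
        rw [Finset.mem_filter, hT, Finset.mem_filter]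
        simp only [Finset.mem_univ, true_and]
      have key : ∀ p ∈ T.filter (fun p => ¬ Bp p),
          (Φ p ∈ T.filter (fun p => ¬ Bp p)) ∧ Φ (Φ p) = p ∧ Φ p ≠ p := by
        rintro ⟨s, j⟩ hp
        rw [mem_iff] at hp
        obtain ⟨hgood, hnB⟩ := hp
        by_cases hj0 : j = 0
        · subst hj0
          have hgap := gap_of_good L s hgood htop
          have hgood' : isGood (lab L (up s)) (Fin.last (e+1)) :=
            (isGood_up L s hgap).1 hgood
          have hΦΦ : Φ (up s, Fin.last (e+1)) = (s, 0) := by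
            rw [Φl, up_down]
          have hmem : Φ (s, 0) ∈ T.filter (fun p => ¬ Bp p) := by
            rw [Φ0, mem_iff]
            refine ⟨hgood', ?_⟩
            rw [hBp]
            rintro ⟨-, hperm, hbase⟩
            rw [up_perm_last] at hperm
            have hup1 : (up s).1 (Fin.last e) = s.1 (Fin.last e) + 1 := by
              show (if Fin.last e = s.2 0 then s.1 (Fin.last e) + 1 else s.1 (Fin.last e)) = _
              rw [if_pos hperm.symm]
            rw [hup1] at hbase
            rw [hperm] at hgap
            have hv : ((s.1 (Fin.last e) + 1 : Fin k) : ℕ) = (s.1 (Fin.last e) : ℕ) + 1 :=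
              val_add_one_lt hgap
            have hz := congrArg Fin.val hbase
            rw [hv] at hz
            simp at hz
          refine ⟨hmem, by rw [Φ0, hΦΦ], ?_⟩
          rw [Φ0]
          intro h
          exact (zero_ne_last (e := e)) (congrArg Prod.snd h).symm
        · by_cases hjl : j = Fin.last (e+1)
          · subst hjl
            have hbne : s.1 (s.2 (Fin.last e)) ≠ 0 := by
              intro hb
              by_cases hpl : s.2 (Fin.last e) = Fin.last e
              · refine hnB ?_
                rw [hBp]
                exact ⟨rfl, hpl, by rw [← hpl]; exact hb⟩
              · exact notGood_last L s hb hpl h0 hgood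
            have hbv : (s.1 (s.2 (Fin.last e)) : ℕ) ≠ 0 := by
              intro h
              exact hbne (Fin.ext (by simp [h]))
            have hup : up (down s) = s := down_up s
            have hdz : (down s).2 0 = s.2 (Fin.last e) := down_perm_zero s
            have hdbase : ((down s).1 ((down s).2 0) : ℕ)
                = (s.1 (s.2 (Fin.last e)) : ℕ) - 1 := by
              rw [hdz]
              show ((if s.2 (Fin.last e) = s.2 (Fin.last e)
                then s.1 (s.2 (Fin.last e)) - 1 else s.1 (s.2 (Fin.last e)) : Fin k) : ℕ) = _
              rw [if_pos rfl]
              exact val_sub_one hbv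
            have hgap' : ((down s).1 ((down s).2 0) : ℕ) + 1 < k := by
              have hlt := (s.1 (s.2 (Fin.last e))).isLt
              omega
            have hgood' : isGood (lab L (down s)) 0 := by
              apply (isGood_up L (down s) hgap').2
              rw [hup]
              exact hgood
            have hΦΦ : Φ (down s, 0) = (s, Fin.last (e+1)) := by
              rw [Φ0, hup]
            have hmem : Φ (s, Fin.last (e+1)) ∈ T.filter (fun p => ¬ Bp p) := by
              rw [Φl, mem_iff]
              refine ⟨hgood', ?_⟩
              rw [hBp]
              rintro ⟨hc, -, -⟩
              exact (zero_ne_last (e := e)) hc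
            refine ⟨hmem, by rw [Φl, hΦΦ], ?_⟩
            rw [Φl]
            intro h
            exact (zero_ne_last (e := e)) (congrArg Prod.snd h)
          · have hgood' : isGood (lab L (mid s j)) j :=
              (isGood_congr (fun t ht => congrArg L (vtx_mid s hj0 hjl ht))).2 hgood
            have hmem : Φ (s, j) ∈ T.filter (fun p => ¬ Bp p) := by
              rw [Φm s j hj0 hjl, mem_iff]
              refine ⟨hgood', ?_⟩
              rw [hBp]
              rintro ⟨hc, -, -⟩
              exact hjl hc
            refine ⟨hmem, ?_, ?_⟩
            · rw [Φm s j hj0 hjl, Φm _ j hj0 hjl, mid_mid]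
            · rw [Φm s j hj0 hjl]
              intro h
              exact mid_ne s hj0 hjl (congrArg Prod.fst h)
      exact even_card_inv _ _ rfl Φ (fun a ha => (key a ha).1)
        (fun a ha => (key a ha).2.1) (fun a ha => (key a ha).2.2)
    have step4 : (T.filter Bp).card
        = (univ.filter fun s' : Simp e k => Surjective (lab L' s')).card := by
      symm
      apply Finset.card_bij
        (fun (s' : Simp e k) (_ : s' ∈ univ.filter fun s' => Surjective (lab L' s')) =>
          (((Fin.snoc s'.1 (0 : Fin k), extPerm s'.2) : Simp (e+1) k), Fin.last (e+1)))
      · intro s' hs'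
        rw [Finset.mem_filter] at hs'
        rw [Finset.mem_filter, hT, Finset.mem_filter, hBp]
        refine ⟨⟨Finset.mem_univ _, ?_⟩, rfl, ?_, ?_⟩
        · exact (surj_iff_good_ext L L' hL' s'.1 s'.2).1 hs'.2
        · show extPerm s'.2 (Fin.last e) = Fin.last e
          exact extPerm_last s'.2
        · show (Fin.snoc s'.1 (0 : Fin k) : Fin (e+1) → Fin k) (Fin.last e) = 0
          exact Fin.snoc_last _ _
      · intro a ha b hb hab
        have h1 : (Fin.snoc a.1 (0:Fin k) : Fin (e+1) → Fin k) = Fin.snoc b.1 0 := by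
          have := congrArg Prod.fst (congrArg Prod.fst hab)
          exact this
        have h2 : extPerm a.2 = extPerm b.2 := by
          have := congrArg Prod.snd (congrArg Prod.fst hab)
          exact this
        have hb1 : a.1 = b.1 := by
          funext t
          have h3 := congrFun h1 t.castSucc
          simpa using h3
        exact Prod.ext hb1 (extPerm_injective h2)
      · rintro ⟨⟨b, π⟩, j⟩ hp
        rw [Finset.mem_filter, hT, Finset.mem_filter, hBp] at hp
        obtain ⟨⟨-, hgood⟩, hjl, hπl, hbl⟩ := hp
        dsimp only at hgood hjl hπl hbl
        subst hjl
        have hne1 : ∀ t : Fin e, π t.castSucc ≠ Fin.last e := by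
          intro t h
          exact (Fin.castSucc_lt_last t).ne (π.injective (h.trans hπl.symm))
        have hπls : π.symm (Fin.last e) = Fin.last e := by rw [Equiv.symm_apply_eq, hπl]
        have hne2 : ∀ t : Fin e, π.symm t.castSucc ≠ Fin.last e := by
          intro t h
          exact (Fin.castSucc_lt_last t).ne (π.symm.injective (h.trans hπls.symm))
        set σ : Equiv.Perm (Fin e) :=
          { toFun := fun t => (π t.castSucc).castPred (hne1 t)
            invFun := fun t => (π.symm t.castSucc).castPred (hne2 t)
            left_inv := by
              intro t
              simp only [Fin.castSucc_castPred, Equiv.symm_apply_apply, Fin.castPred_castSucc]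
            right_inv := by
              intro t
              simp only [Fin.castSucc_castPred, Equiv.apply_symm_apply, Fin.castPred_castSucc] }
          with hσ
        have hext : extPerm σ = π := by
          apply Equiv.ext
          intro x
          induction x using Fin.lastCases with
          | last => rw [extPerm_last, hπl]
          | cast t =>
            rw [extPerm_castSucc]
            show (σ t).castSucc = π t.castSucc
            rw [hσ]
            exact Fin.castSucc_castPred (π t.castSucc) (hne1 t)
        have hsnoc : (Fin.snoc (fun t => b t.castSucc) (0:Fin k) : Fin (e+1) → Fin k) = b := by
          funext x
          induction x using Fin.lastCases with
          | last => rw [Fin.snoc_last, hbl]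
          | cast t => rw [Fin.snoc_castSucc]
        refine ⟨((fun t => b t.castSucc), σ), ?_, ?_⟩
        · rw [Finset.mem_filter]
          refine ⟨Finset.mem_univ _, ?_⟩
          apply (surj_iff_good_ext L L' hL' _ σ).2
          rw [hsnoc, hext]
          exact hgood
        · refine Prod.ext (Prod.ext ?_ ?_) rfl
          · exact hsnoc
          · exact hext
    rw [Nat.odd_iff] at hIH ⊢
    rw [step1, ← step2]
    rw [Nat.even_iff] at step3
    omega

end PM

/-- Poincaré–Miranda theorem on a closed box. -/
theorem stmt_8 (n : ℕ) (m M : Fin (n + 1) → ℝ) (hmM : ∀ i, m i < M i)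
    (φ : (Fin (n + 1) → ℝ) → Fin (n + 1) → ℝ)
    (hφcont : ContinuousOn φ (Set.pi Set.univ fun i => Set.Icc (m i) (M i)))
    (hlow : ∀ x ∈ Set.pi Set.univ fun i => Set.Icc (m i) (M i),
      ∀ i, x i = m i → 0 < φ x i)
    (hhigh : ∀ x ∈ Set.pi Set.univ fun i => Set.Icc (m i) (M i),
      ∀ i, x i = M i → φ x i < 0) :
    ∃ x ∈ Set.pi Set.univ fun i => Set.Ioo (m i) (M i), φ x = 0 := by
  classical
  set box : Set (Fin (n+1) → ℝ) := Set.pi Set.univ fun i => Set.Icc (m i) (M i) with hbox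
  by_contra hcon
  push_neg at hcon
  have hne : ∀ x ∈ box, φ x ≠ 0 := by
    intro x hx h0
    refine hcon x ?_ h0
    intro i _
    have hxi := hx i (Set.mem_univ i)
    constructor
    · rcases lt_or_eq_of_le hxi.1 with h | h
      · exact h
      · exact absurd (congrFun h0 i) (ne_of_gt (hlow x hx i h.symm))
    · rcases lt_or_eq_of_le hxi.2 with h | h
      · exact h
      · exact absurd (congrFun h0 i) (ne_of_lt (hhigh x hx i h))
  have hcomp : IsCompact box := isCompact_univ_pi (fun i => isCompact_Icc)
  have hnonempty : box.Nonempty := ⟨m, fun i _ => ⟨le_refl _, (hmM i).le⟩⟩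
  have hcont : ContinuousOn (fun x => ‖φ x‖) box := hφcont.norm
  obtain ⟨x₀, hx₀, hminOn⟩ := hcomp.exists_isMinOn hnonempty hcont
  set ε := ‖φ x₀‖ with hε
  have hεpos : 0 < ε := norm_pos_iff.2 (hne x₀ hx₀)
  have hmin : ∀ x ∈ box, ε ≤ ‖φ x‖ := fun x hx => hminOn hx
  have huc := hcomp.uniformContinuousOn_of_continuous hφcont
  rw [Metric.uniformContinuousOn_iff] at huc
  obtain ⟨δ, hδpos, hδ⟩ := huc ε hεpos
  set R : ℝ := (∑ i, (M i - m i)) + 1 with hR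
  have hRpos : 0 < R := by
    have : (0:ℝ) ≤ ∑ i, (M i - m i) :=
      Finset.sum_nonneg (fun i _ => sub_nonneg.2 (hmM i).le)
    linarith
  have hRle : ∀ i, M i - m i ≤ R := by
    intro i
    have : M i - m i ≤ ∑ j, (M j - m j) :=
      Finset.single_le_sum (f := fun j => M j - m j)
        (fun j _ => sub_nonneg.2 (hmM j).le) (Finset.mem_univ i)
    linarith
  obtain ⟨k0, hk0⟩ := exists_nat_gt (R / δ)
  set k : ℕ := k0 + 1 with hkdef
  have hkpos : 0 < k := Nat.succ_pos k0
  have hkR : R / (k:ℝ) < δ := by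
    have hkℝ : (0:ℝ) < (k:ℝ) := by exact_mod_cast hkpos
    rw [div_lt_iff₀ hkℝ]
    have h1 : R / δ < (k:ℝ) := by
      have : (k0:ℝ) ≤ (k:ℝ) := by exact_mod_cast Nat.le_succ k0
      linarith
    rw [div_lt_iff₀ hδpos] at h1
    linarith
  set p : (Fin (n+1) → ℕ) → (Fin (n+1) → ℝ) :=
    fun x i => m i + (M i - m i) * (x i : ℝ) / k with hp
  have hpbox : ∀ x : Fin (n+1) → ℕ, (∀ i, x i ≤ k) → p x ∈ box := by
    intro x hx i _
    have hkℝ : (0:ℝ) < (k:ℝ) := by exact_mod_cast hkpos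
    have hmi := (hmM i).le
    have h1 : (0:ℝ) ≤ (M i - m i) * (x i : ℝ) / k := by
      apply div_nonneg _ hkℝ.le
      apply mul_nonneg (by linarith) (Nat.cast_nonneg _)
    have h2 : (M i - m i) * (x i : ℝ) / k ≤ M i - m i := by
      rw [mul_div_assoc]
      have hx1 : (x i : ℝ) / k ≤ 1 := by
        rw [div_le_one hkℝ]
        exact_mod_cast hx i
      nlinarith
    constructor
    · show m i ≤ m i + (M i - m i) * (x i : ℝ) / k
      linarith
    · show m i + (M i - m i) * (x i : ℝ) / k ≤ M i
      linarith
  set L : (Fin (n+1) → ℕ) → Fin (n+2) :=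
    fun x => if h : ∃ i, φ (p x) i < 0 then (Classical.choose h).succ else 0 with hL
  have hLspec : ∀ x (i : Fin (n+1)), L x = i.succ → φ (p x) i < 0 := by
    intro x i hLx
    rw [hL] at hLx
    simp only at hLx
    by_cases h : ∃ j, φ (p x) j < 0
    · rw [dif_pos h] at hLx
      have := Classical.choose_spec h
      rwa [Fin.succ_inj.1 hLx] at this
    · rw [dif_neg h] at hLx
      exact absurd hLx.symm (Fin.succ_ne_zero i)
  have hL0 : ∀ x, L x = 0 → ∀ i, 0 ≤ φ (p x) i := by
    intro x hLx i
    rw [hL] at hLx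
    simp only at hLx
    by_cases h : ∃ j, φ (p x) j < 0
    · rw [dif_pos h] at hLx
      exact absurd hLx (Fin.succ_ne_zero _)
    · push_neg at h
      exact h i
  have h0cond : ∀ x : Fin (n+1) → ℕ, (∀ i, x i ≤ k) → ∀ i : Fin (n+1),
      x i = 0 → L x ≠ i.succ := by
    intro x hx i hxi hLx
    have hneg := hLspec x i hLx
    have hpm : p x i = m i := by
      rw [hp]
      simp [hxi]
    have := hlow (p x) (hpbox x hx) i hpm
    linarith
  have htopcond : ∀ x : Fin (n+1) → ℕ, (∀ i, x i ≤ k) → (∃ i, x i = k) →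
      L x ≠ 0 := by
    rintro x hx ⟨i, hxi⟩ hLx
    have hpM : p x i = M i := by
      rw [hp]
      simp only [hxi]
      have hkne : (k:ℝ) ≠ 0 := by
        have : (0:ℝ) < (k:ℝ) := by exact_mod_cast hkpos
        linarith
      field_simp
      ring
    have h1 := hhigh (p x) (hpbox x hx) i hpM
    have h2 := hL0 x hLx i
    linarith
  have hodd := PM.kuhn (n+1) k hkpos L h0cond htopcond
  have hpos : 0 < (Finset.univ.filter
      fun s : PM.Simp (n+1) k => Function.Surjective (PM.lab L s)).card := by
    rcases Nat.eq_zero_or_pos (Finset.univ.filter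
      fun s : PM.Simp (n+1) k => Function.Surjective (PM.lab L s)).card with h | h
    · rw [h] at hodd
      simp at hodd
    · exact h
  obtain ⟨s, hsmem⟩ := Finset.card_pos.1 hpos
  have hsurj : Function.Surjective (PM.lab L s) := (Finset.mem_filter.1 hsmem).2
  obtain ⟨t0, ht0⟩ := hsurj 0
  set a : Fin (n+1) → ℝ := p (PM.vtx s t0) with ha
  have habox : a ∈ box := hpbox _ (PM.vtx_le s t0)
  have hεa : ε ≤ ‖φ a‖ := hmin a habox
  obtain ⟨istar, -, hnorm⟩ := Finset.exists_mem_eq_sup (Finset.univ : Finset (Fin (n+1)))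
    Finset.univ_nonempty (fun i => ‖φ a i‖₊)
  have hnormeq : ‖φ a‖ = |φ a istar| := by
    rw [Pi.norm_def, hnorm]
    simp [Real.norm_eq_abs]
  have h0lab : ∀ i, 0 ≤ φ a i := hL0 _ ht0
  have hai : ε ≤ φ a istar := by
    rw [hnormeq, abs_of_nonneg (h0lab istar)] at hεa
    exact hεa
  obtain ⟨t1, ht1⟩ := hsurj istar.succ
  set bpt : Fin (n+1) → ℝ := p (PM.vtx s t1) with hb
  have hbbox : bpt ∈ box := hpbox _ (PM.vtx_le s t1)
  have hbneg : φ bpt istar < 0 := hLspec _ _ ht1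
  have hvtxdiff : ∀ i, (PM.vtx s t0 i : ℤ) - PM.vtx s t1 i ≤ 1 ∧
      (PM.vtx s t1 i : ℤ) - PM.vtx s t0 i ≤ 1 := by
    intro i
    unfold PM.vtx
    split <;> split <;> push_cast <;> omega
  have hdist : dist a bpt < δ := by
    rw [dist_pi_lt_iff hδpos]
    intro i
    have hkℝ : (0:ℝ) < (k:ℝ) := by exact_mod_cast hkpos
    have hdiff : |(PM.vtx s t0 i : ℝ) - (PM.vtx s t1 i : ℝ)| ≤ 1 := by
      rw [abs_le]
      obtain ⟨hd1, hd2⟩ := hvtxdiff i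
      constructor
      · have h' : (((PM.vtx s t1 i : ℤ) : ℝ)) - ((PM.vtx s t0 i : ℤ) : ℝ) ≤ 1 := by
          exact_mod_cast hd2
        push_cast at h'
        linarith
      · have h' : (((PM.vtx s t0 i : ℤ) : ℝ)) - ((PM.vtx s t1 i : ℤ) : ℝ) ≤ 1 := by
          exact_mod_cast hd1
        push_cast at h'
        linarith
    have heq : a i - bpt i = (M i - m i) * ((PM.vtx s t0 i : ℝ) - PM.vtx s t1 i) / k := by
      rw [ha, hb, hp]
      ring
    rw [Real.dist_eq, heq]
    rw [abs_div, abs_mul]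
    have h1 : |M i - m i| = M i - m i := abs_of_nonneg (by linarith [hmM i])
    have h2 : |(k:ℝ)| = (k:ℝ) := abs_of_pos hkℝ
    rw [h1, h2]
    have h3 : (M i - m i) * |(PM.vtx s t0 i : ℝ) - PM.vtx s t1 i| ≤ R * 1 := by
      apply mul_le_mul (hRle i) hdiff (abs_nonneg _) hRpos.le
    calc (M i - m i) * |(PM.vtx s t0 i : ℝ) - PM.vtx s t1 i| / k
        ≤ R * 1 / k := (div_le_div_iff_of_pos_right hkℝ).2 h3
      _ = R / k := by ring
      _ < δ := hkR
  have hφclose := hδ a habox bpt hbbox hdist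
  have hcoord := dist_le_pi_dist (φ a) (φ bpt) istar
  rw [Real.dist_eq] at hcoord
  have : φ a istar - φ bpt istar ≤ |φ a istar - φ bpt istar| := le_abs_self _
  have hlt : dist (φ a) (φ bpt) < ε := hφclose
  linarith
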